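/- Let φ ∈ C([0,1]), and for λ ∈ ℝ let s₀(·,λ) solve −s₀'' + φ·s₀ = λ·s₀ with s₀(0)=0, s₀'(0)=1, and s₁(·,λ) solve the same equation with s₁(1)=0, s₁'(1)=1. Define Δ(λ) = s₀(1,λ). Then for λ₁ ≠ λ₂, (Δ(λ₁) − Δ(λ₂))/(λ₁ − λ₂) = ∫₀¹ s₀(x,λ₁)·s₁(x,λ₂) dx. -/

import Mathlib

theorem stmt6 (φ : ℝ → ℝ) (hφ : ContinuousOn φ (Set.Icc 0 1))
    (s₀ s₀' s₁ s₁' : ℝ → ℝ → ℝ)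
    (hds₀ : ∀ lam : ℝ, ∀ x ∈ Set.Icc (0:ℝ) 1, HasDerivAt (s₀ lam) (s₀' lam x) x)
    (hos₀ : ∀ lam : ℝ, ∀ x ∈ Set.Icc (0:ℝ) 1,
      HasDerivAt (s₀' lam) ((φ x - lam) * s₀ lam x) x)
    (hds₁ : ∀ lam : ℝ, ∀ x ∈ Set.Icc (0:ℝ) 1, HasDerivAt (s₁ lam) (s₁' lam x) x)
    (hos₁ : ∀ lam : ℝ, ∀ x ∈ Set.Icc (0:ℝ) 1,
      HasDerivAt (s₁' lam) ((φ x - lam) * s₁ lam x) x)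
    (h₀0 : ∀ lam : ℝ, s₀ lam 0 = 0) (h₀1 : ∀ lam : ℝ, s₀' lam 0 = 1)
    (h₁0 : ∀ lam : ℝ, s₁ lam 1 = 0) (h₁1 : ∀ lam : ℝ, s₁' lam 1 = 1)
    (Δ : ℝ → ℝ) (hΔ : ∀ lam : ℝ, Δ lam = s₀ lam 1)
    (lam₁ lam₂ : ℝ) (hne : lam₁ ≠ lam₂) :
    (Δ lam₁ - Δ lam₂) / (lam₁ - lam₂)
      = ∫ x in (0:ℝ)..1, s₀ lam₁ x * s₁ lam₂ x := by
  have h01 : (0:ℝ) ≤ 1 := zero_le_one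
  -- mixed Wronskian
  have hWd : ∀ x ∈ Set.uIcc (0:ℝ) 1,
      HasDerivAt (fun x => s₀ lam₁ x * s₁' lam₂ x - s₀' lam₁ x * s₁ lam₂ x)
        ((lam₁ - lam₂) * (s₀ lam₁ x * s₁ lam₂ x)) x := by
    intro x hx
    rw [Set.uIcc_of_le h01] at hx
    have h := ((hds₀ lam₁ x hx).mul (hos₁ lam₂ x hx)).sub
      ((hos₀ lam₁ x hx).mul (hds₁ lam₂ x hx))
    exact h.congr_deriv (by ring)
  have hcont : ContinuousOn (fun x => (lam₁ - lam₂) * (s₀ lam₁ x * s₁ lam₂ x))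
      (Set.uIcc (0:ℝ) 1) := by
    rw [Set.uIcc_of_le h01]
    have c1 : ContinuousOn (s₀ lam₁) (Set.Icc (0:ℝ) 1) :=
      fun x hx => ((hds₀ lam₁ x hx).continuousAt).continuousWithinAt
    have c2 : ContinuousOn (s₁ lam₂) (Set.Icc (0:ℝ) 1) :=
      fun x hx => ((hds₁ lam₂ x hx).continuousAt).continuousWithinAt
    exact continuousOn_const.mul (c1.mul c2)
  have hint := intervalIntegral.integral_eq_sub_of_hasDerivAt hWd
    (hcont.intervalIntegrable)
  -- same-λ₂ Wronskian is constant
  have hW2d : ∀ x ∈ Set.uIcc (0:ℝ) 1,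
      HasDerivAt (fun x => s₀ lam₂ x * s₁' lam₂ x - s₀' lam₂ x * s₁ lam₂ x) (0:ℝ) x := by
    intro x hx
    rw [Set.uIcc_of_le h01] at hx
    have h := ((hds₀ lam₂ x hx).mul (hos₁ lam₂ x hx)).sub
      ((hos₀ lam₂ x hx).mul (hds₁ lam₂ x hx))
    exact h.congr_deriv (by ring)
  have hint2 := intervalIntegral.integral_eq_sub_of_hasDerivAt hW2d
    (intervalIntegrable_const (c := (0:ℝ)))
  rw [intervalIntegral.integral_zero] at hint2
  simp only [h₀0, h₀1, h₁0, h₁1] at hint hint2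
  -- hint2 : 0 = (s₀ lam₂ 1 * 1 - s₀' lam₂ 1 * 0) - (0 * s₁' lam₂ 0 - 1 * s₁ lam₂ 0)
  rw [intervalIntegral.integral_const_mul] at hint
  have hsub : lam₁ - lam₂ ≠ 0 := sub_ne_zero.mpr hne
  rw [hΔ lam₁, hΔ lam₂]
  field_simp
  linear_combination -hint + hint2
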